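/- Let S be a ring and let P_1, ..., P_k be completely prime two-sided ideals of S. If every non-invertible element of S lies in P_1 ∪ ... ∪ P_k, then every proper right ideal of S is contained in one of the ideals P_1, ..., P_k. -/

import Mathlib

/-- A set `P` in a ring `S` is a completely prime two-sided ideal if it is a proper
two-sided ideal such that `x * y ∈ P` implies `x ∈ P` or `y ∈ P`. -/
def IsCompletelyPrimeIdealSet {S : Type*} [Ring S] (P : Set S) : Prop :=
  (0 : S) ∈ P ∧ (∀ x ∈ P, ∀ y ∈ P, x + y ∈ P) ∧
  (∀ x ∈ P, ∀ s : S, s * x ∈ P) ∧ (∀ x ∈ P, ∀ s : S, x * s ∈ P) ∧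
  P ≠ Set.univ ∧ ∀ x y : S, x * y ∈ P → x ∈ P ∨ y ∈ P

/-- A set `I` in a ring `S` is a right ideal if it contains `0` and is closed under
addition and under right multiplication by arbitrary ring elements. -/
def IsRightIdealSet {S : Type*} [Ring S] (I : Set S) : Prop :=
  (0 : S) ∈ I ∧ (∀ x ∈ I, ∀ y ∈ I, x + y ∈ I) ∧ ∀ x ∈ I, ∀ s : S, x * s ∈ I

section Aux
variable {S : Type*} [Ring S]

lemma cpi_one_not_mem {P : Set S} (h : IsCompletelyPrimeIdealSet P) : (1 : S) ∉ P := by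
  intro h1
  apply h.2.2.2.2.1
  ext s
  simp only [Set.mem_univ, iff_true]
  simpa using h.2.2.2.1 1 h1 s

lemma cpi_neg_mem {P : Set S} (h : IsCompletelyPrimeIdealSet P) {x : S} (hx : x ∈ P) :
    -x ∈ P := by simpa using h.2.2.2.1 x hx (-1)

lemma cpi_mem_of_add {P : Set S} (h : IsCompletelyPrimeIdealSet P) {x y : S}
    (hx : x ∈ P) (hxy : x + y ∈ P) : y ∈ P := by
  have := h.2.1 _ hxy _ (cpi_neg_mem h hx)
  simpa [add_comm, add_assoc] using this

lemma cpi_list_prod_not_mem {P : Set S} (h : IsCompletelyPrimeIdealSet P) :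
    ∀ L : List S, (∀ a ∈ L, a ∉ P) → L.prod ∉ P := by
  intro L
  induction L with
  | nil => intro _; simpa using cpi_one_not_mem h
  | cons a l ih =>
    intro hL hmem
    rw [List.prod_cons] at hmem
    rcases h.2.2.2.2.2 _ _ hmem with hc | hc
    · exact hL a List.mem_cons_self hc
    · exact ih (fun b hb => hL b (List.mem_cons_of_mem a hb)) hc

lemma cpi_list_prod_mem {P : Set S} (h : IsCompletelyPrimeIdealSet P) :
    ∀ L : List S, (∃ a ∈ L, a ∈ P) → L.prod ∈ P := by
  intro L
  induction L with
  | nil => rintro ⟨a, ha, _⟩; simp at ha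
  | cons a l ih =>
    rintro ⟨b, hb, hbP⟩
    rw [List.prod_cons]
    rcases List.mem_cons.mp hb with rfl | hb
    · exact h.2.2.2.1 _ hbP _
    · exact h.2.2.1 _ (ih ⟨b, hb, hbP⟩) _

lemma right_ideal_list_prod_mem {I : Set S} (hI : IsRightIdealSet I) {L : List S}
    (hne : L ≠ []) (hL : ∀ a ∈ L, a ∈ I) : L.prod ∈ I := by
  cases L with
  | nil => exact absurd rfl hne
  | cons a l =>
    rw [List.prod_cons]
    exact hI.2.2 a (hL a List.mem_cons_self) l.prod

lemma key_avoidance {k : ℕ} (P : Fin k → Set S)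
    (hP : ∀ i, IsCompletelyPrimeIdealSet (P i))
    (I : Set S) (hI : IsRightIdealSet I) :
    ∀ T : Finset (Fin k), (∀ x ∈ I, ∃ i ∈ T, x ∈ P i) → ∃ i ∈ T, I ⊆ P i := by
  intro T
  induction T using Finset.strongInduction with
  | _ T IH =>
    intro hcov
    by_cases hred : ∃ i ∈ T, ∀ x ∈ I, ∃ j ∈ T.erase i, x ∈ P j
    · obtain ⟨i, hi, hcov'⟩ := hred
      obtain ⟨j, hj, hsub⟩ := IH (T.erase i) (Finset.erase_ssubset hi) hcov'
      exact ⟨j, Finset.mem_of_mem_erase hj, hsub⟩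
    push_neg at hred
    -- T is nonempty
    obtain ⟨i₀, hi₀T, _⟩ := hcov 0 hI.1
    by_cases hE : T.erase i₀ = ∅
    · refine ⟨i₀, hi₀T, fun x hx => ?_⟩
      obtain ⟨j, hjT, hxj⟩ := hcov x hx
      have : j = i₀ := by
        by_contra hne
        have : j ∈ T.erase i₀ := Finset.mem_erase.mpr ⟨hne, hjT⟩
        simp [hE] at this
      exact this ▸ hxj
    · exfalso
      choose! x hxI hxnot using hred
      have hxP : ∀ i ∈ T, x i ∈ P i := by
        intro i hi
        obtain ⟨j, hjT, hxj⟩ := hcov (x i) (hxI i hi)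
        rcases eq_or_ne j i with rfl | hne
        · exact hxj
        · exact absurd hxj (hxnot i hi j (Finset.mem_erase.mpr ⟨hne, hjT⟩))
      set L := (T.erase i₀).toList.map x with hLdef
      have hLne : L ≠ [] := by
        simp [L, Finset.toList_eq_nil, hE]
      have hLI : ∀ a ∈ L, a ∈ I := by
        intro a ha
        obtain ⟨j, hj, rfl⟩ := List.mem_map.mp ha
        exact hxI j (Finset.mem_of_mem_erase (Finset.mem_toList.mp hj))
      have hprodI : L.prod ∈ I := right_ideal_list_prod_mem hI hLne hLI
      have hyI : x i₀ + L.prod ∈ I := hI.2.1 _ (hxI i₀ hi₀T) _ hprodI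
      obtain ⟨j, hjT, hyj⟩ := hcov _ hyI
      rcases eq_or_ne j i₀ with rfl | hne
      · -- then L.prod ∈ P j, contradiction
        have hprod : L.prod ∈ P j := cpi_mem_of_add (hP j) (hxP j hjT) hyj
        refine cpi_list_prod_not_mem (hP j) L ?_ hprod
        intro a ha
        obtain ⟨m, hm, rfl⟩ := List.mem_map.mp ha
        have hmE : m ∈ T.erase j := Finset.mem_toList.mp hm
        have hmT : m ∈ T := Finset.mem_of_mem_erase hmE
        have : j ∈ T.erase m :=
          Finset.mem_erase.mpr ⟨fun h => (Finset.mem_erase.mp hmE).1 h.symm, hjT⟩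
        exact hxnot m hmT j this
      · have hjE : j ∈ T.erase i₀ := Finset.mem_erase.mpr ⟨hne, hjT⟩
        have hprod : L.prod ∈ P j := by
          refine cpi_list_prod_mem (hP j) L ⟨x j, ?_, hxP j hjT⟩
          exact List.mem_map.mpr ⟨j, Finset.mem_toList.mpr hjE, rfl⟩
        -- then x i₀ ∈ P j
        have hx0 : x i₀ ∈ P j := by
          have := cpi_mem_of_add (hP j) hprod (by rwa [add_comm] at hyj)
          exact this
        exact hxnot i₀ hi₀T j hjE hx0

end Aux

/-- If every non-invertible element of a ring `S` lies in the union of finitely many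
completely prime two-sided ideals `P 1, ..., P k`, then every proper right ideal of `S`
is contained in one of the `P i`. -/
theorem every_proper_right_ideal_le_of_nonunits_subset_union
    {S : Type*} [Ring S] {k : ℕ} (P : Fin k → Set S)
    (hP : ∀ i, IsCompletelyPrimeIdealSet (P i))
    (hcover : ∀ x : S, ¬IsUnit x → ∃ i, x ∈ P i)
    (I : Set S) (hI : IsRightIdealSet I) (hproper : I ≠ Set.univ) :
    ∃ i, I ⊆ P i := by
  have hnonunit : ∀ x ∈ I, ¬IsUnit x := by
    intro x hx hu
    apply hproper
    obtain ⟨u, rfl⟩ := hu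
    have h1 : (1 : S) ∈ I := by simpa using hI.2.2 _ hx (↑u⁻¹)
    ext s
    simp only [Set.mem_univ, iff_true]
    simpa using hI.2.2 1 h1 s
  obtain ⟨i, _, hsub⟩ := key_avoidance P hP I hI Finset.univ
    (fun x hx => by
      obtain ⟨i, hi⟩ := hcover x (hnonunit x hx)
      exact ⟨i, Finset.mem_univ i, hi⟩)
  exact ⟨i, hsub⟩
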